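/- Let σ > 0 and let μ satisfy 0 < μ < μ₃(σ), where μ₃(σ) = (σ + 1)/(3σ + 4). Then the radicand −(3σ² + 4σ)μ² − 2(σ² + 3σ + 2)μ + (σ + 1)² is strictly positive, the divergent displacement satisfies 0 < δ̃(σ,μ) < 1/2, and both points (1/2 + δ̃(σ,μ), 1/2 − δ̃(σ,μ)) and (1/2 − δ̃(σ,μ), 1/2 + δ̃(σ,μ)) are equilibria of the fully symmetric convergence–divergence game. -/
import Mathlib


noncomputable def F1 (σ μ x y : ℝ) : ℝ :=
  ((1 - x) - μ) * x * (x + σ * x * (1 - y)) - (x - μ) * (1 - x) * ((1 - x) + σ * (1 - x) * y)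

noncomputable def F2 (σ μ x y : ℝ) : ℝ :=
  ((1 - y) - μ) * y * (y + σ * y * (1 - x)) - (y - μ) * (1 - y) * ((1 - y) + σ * (1 - y) * x)

noncomputable def deltaTilde (σ μ : ℝ) : ℝ :=
  Real.sqrt (-(3 * σ^2 + 4 * σ) * μ^2 - 2 * (σ^2 + 3 * σ + 2) * μ + (σ + 1)^2) /
    (2 * (σ * μ + σ + 1))

theorem divergent_equilibria_exist (σ μ : ℝ) (hσ : 0 < σ)
    (hlo : 0 < μ) (hhi : μ < (σ + 1) / (3 * σ + 4)) :
    0 < -(3 * σ^2 + 4 * σ) * μ^2 - 2 * (σ^2 + 3 * σ + 2) * μ + (σ + 1)^2 ∧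
    0 < deltaTilde σ μ ∧ deltaTilde σ μ < 1/2 ∧
    (F1 σ μ (1/2 + deltaTilde σ μ) (1/2 - deltaTilde σ μ) = 0 ∧
      F2 σ μ (1/2 + deltaTilde σ μ) (1/2 - deltaTilde σ μ) = 0) ∧
    (F1 σ μ (1/2 - deltaTilde σ μ) (1/2 + deltaTilde σ μ) = 0 ∧
      F2 σ μ (1/2 - deltaTilde σ μ) (1/2 + deltaTilde σ μ) = 0) := by
  set R : ℝ := -(3 * σ^2 + 4 * σ) * μ^2 - 2 * (σ^2 + 3 * σ + 2) * μ + (σ + 1)^2 with hRdef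
  have h34 : (0:ℝ) < 3 * σ + 4 := by linarith
  have hμ0 : μ * (3 * σ + 4) < σ + 1 := (lt_div_iff₀ h34).mp hhi
  have hdh : (0:ℝ) < σ * μ + σ + 1 := by positivity
  have hR : 0 < R := by
    have hfac : R = ((σ + 1) - (3 * σ + 4) * μ) * ((σ + 1) + σ * μ) := by
      rw [hRdef]; ring
    rw [hfac]
    apply mul_pos
    · nlinarith
    · positivity
  have hsqrt : 0 < Real.sqrt R := Real.sqrt_pos.mpr hR
  have hδdef : deltaTilde σ μ = Real.sqrt R / (2 * (σ * μ + σ + 1)) := rfl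
  have hδpos : 0 < deltaTilde σ μ := by
    rw [hδdef]; positivity
  set δ := deltaTilde σ μ with hδ
  have hrel : (2 * (σ * μ + σ + 1) * δ)^2 = R := by
    rw [hδdef]
    rw [mul_div_cancel₀ _ (by positivity : (2 * (σ * μ + σ + 1)) ≠ 0)]
    exact Real.sq_sqrt hR.le
  have hrel' : 4 * (σ * μ + σ + 1)^2 * δ^2 = R := by
    rw [← hrel]; ring
  have hδhalf : δ < 1/2 := by
    have hlt : Real.sqrt R < σ * μ + σ + 1 := by
      rw [show σ * μ + σ + 1 = Real.sqrt ((σ * μ + σ + 1)^2) from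
        (Real.sqrt_sq hdh.le).symm]
      apply Real.sqrt_lt_sqrt hR.le
      nlinarith
    rw [hδdef, div_lt_iff₀ (by positivity)]
    linarith
  have hne : (2 * (σ * μ + σ + 1)) ≠ 0 := by positivity
  have key1 : 2 * (σ * μ + σ + 1) * F1 σ μ (1/2 + δ) (1/2 - δ) = 0 := by
    simp only [F1]
    linear_combination (-δ) * hrel'
  have key2 : 2 * (σ * μ + σ + 1) * F2 σ μ (1/2 + δ) (1/2 - δ) = 0 := by
    simp only [F2]
    linear_combination δ * hrel'
  have key3 : 2 * (σ * μ + σ + 1) * F1 σ μ (1/2 - δ) (1/2 + δ) = 0 := by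
    simp only [F1]
    linear_combination δ * hrel'
  have key4 : 2 * (σ * μ + σ + 1) * F2 σ μ (1/2 - δ) (1/2 + δ) = 0 := by
    simp only [F2]
    linear_combination (-δ) * hrel'
  refine ⟨hR, hδpos, hδhalf, ⟨?_, ?_⟩, ⟨?_, ?_⟩⟩
  · exact (mul_eq_zero.mp key1).resolve_left hne
  · exact (mul_eq_zero.mp key2).resolve_left hne
  · exact (mul_eq_zero.mp key3).resolve_left hne
  · exact (mul_eq_zero.mp key4).resolve_left hne
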